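/- Let t ∈ [0,1), let δ > 0, and let p̂ be a design measure on the design points x_1, …, x_n ∈ ℝ^q with H(p̂) invertible. If ψ_{Ai}(p̂) − tr{H(p̂)}⁻¹ ≤ δ for every i with 1 ≤ i ≤ n, then −tr{H(p̂)}⁻¹ ≥ −tr{H(p)}⁻¹ − δ for every design measure p with H(p) invertible. -/

import Mathlib

open Matrix BigOperators Finset

noncomputable section

/-- A design measure: nonnegative masses summing to 1. -/
def designMeasure {n : ℕ} (p : Fin n → ℝ) : Prop :=
  (∀ i, 0 ≤ p i) ∧ ∑ i, p i = 1

/-- G(p) = Σ pᵢ xᵢ xᵢᵀ. -/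
def Gmat {q n : ℕ} (x : Fin n → Fin q → ℝ) (p : Fin n → ℝ) : Matrix (Fin q) (Fin q) ℝ :=
  ∑ i, p i • Matrix.vecMulVec (x i) (x i)

/-- g(p) = Σ pᵢ xᵢ. -/
def gvec {q n : ℕ} (x : Fin n → Fin q → ℝ) (p : Fin n → ℝ) : Fin q → ℝ :=
  ∑ i, p i • x i

/-- H(p) = G(p) − t g(p) g(p)ᵀ. -/
def Hmat {q n : ℕ} (t : ℝ) (x : Fin n → Fin q → ℝ) (p : Fin n → ℝ) : Matrix (Fin q) (Fin q) ℝ :=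
  Gmat x p - t • Matrix.vecMulVec (gvec x p) (gvec x p)

/-- ψ_{Di}(p). -/
def psiD {q n : ℕ} (t : ℝ) (x : Fin n → Fin q → ℝ) (p : Fin n → ℝ) (i : Fin n) : ℝ :=
  (1 - t) * (x i ⬝ᵥ ((Hmat t x p)⁻¹ *ᵥ x i))
    + t * ((x i - gvec x p) ⬝ᵥ ((Hmat t x p)⁻¹ *ᵥ (x i - gvec x p)))

/-- ψ_{Ai}(p). -/
def psiA {q n : ℕ} (t : ℝ) (x : Fin n → Fin q → ℝ) (p : Fin n → ℝ) (i : Fin n) : ℝ :=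
  (1 - t) * (x i ⬝ᵥ (((Hmat t x p)⁻¹ * (Hmat t x p)⁻¹) *ᵥ x i))
    + t * ((x i - gvec x p) ⬝ᵥ (((Hmat t x p)⁻¹ * (Hmat t x p)⁻¹) *ᵥ (x i - gvec x p)))

end

namespace Statement8Aux
open Matrix BigOperators Finset

variable {q n : ℕ}

lemma dot_sum_smul (u : Fin q → ℝ) (c : Fin n → ℝ) (w : Fin n → Fin q → ℝ) :
    u ⬝ᵥ (∑ k, c k • w k) = ∑ k, c k * (u ⬝ᵥ w k) := by
  simp only [dotProduct, Finset.sum_apply, Pi.smul_apply, smul_eq_mul, Finset.mul_sum]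
  rw [Finset.sum_comm]
  congr 1; ext k; congr 1; ext i; ring

lemma mulVec_sum_smul (M : Matrix (Fin q) (Fin q) ℝ) (c : Fin n → ℝ) (w : Fin n → Fin q → ℝ) :
    M *ᵥ (∑ k, c k • w k) = ∑ k, c k • (M *ᵥ w k) := by
  have h : M *ᵥ (∑ k, c k • w k) = M.mulVecLin (∑ k, c k • w k) := rfl
  rw [h, map_sum]
  simp [Matrix.mulVecLin_apply]

lemma sum_smul_mulVec (c : Fin n → ℝ) (A : Fin n → Matrix (Fin q) (Fin q) ℝ) (v : Fin q → ℝ) :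
    (∑ i, c i • A i) *ᵥ v = ∑ i, c i • (A i *ᵥ v) := by
  ext j
  simp only [Matrix.mulVec, dotProduct, Finset.sum_apply, Matrix.sum_apply, Pi.smul_apply,
    Matrix.smul_apply, smul_eq_mul, Finset.sum_mul]
  rw [Finset.sum_comm]
  congr 1; ext k; rw [Finset.mul_sum]; congr 1; ext i; ring

lemma dot_vecMulVec_mulVec (a b u w : Fin q → ℝ) :
    u ⬝ᵥ (Matrix.vecMulVec a b *ᵥ w) = (u ⬝ᵥ a) * (b ⬝ᵥ w) := by
  simp only [dotProduct, Matrix.mulVec, Matrix.vecMulVec_apply, dotProduct,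
    Finset.mul_sum, Finset.sum_mul]
  rw [Finset.sum_comm]
  congr 1; ext i; congr 1; ext j; ring

lemma psd_trace_nonneg {M : Matrix (Fin q) (Fin q) ℝ} (h : M.PosSemidef) :
    0 ≤ Matrix.trace M := by
  rw [Matrix.trace]
  apply Finset.sum_nonneg
  intro i _
  have := h.dotProduct_mulVec_nonneg (Pi.single i 1)
  simpa [Matrix.mulVec, dotProduct, Pi.single_apply, Finset.sum_ite_eq', ite_mul, mul_ite] using this

variable (t : ℝ) (x : Fin n → Fin q → ℝ) (p : Fin n → ℝ)

lemma trace_mul_vecMulVec' (M : Matrix (Fin q) (Fin q) ℝ) (u v : Fin q → ℝ) :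
    Matrix.trace (M * Matrix.vecMulVec u v) = v ⬝ᵥ (M *ᵥ u) := by
  simp only [Matrix.trace, Matrix.diag, Matrix.mul_apply, Matrix.vecMulVec_apply,
    dotProduct, Matrix.mulVec, Finset.mul_sum]
  congr 1; ext i; congr 1; ext j; ring

lemma trace_mul_Hmat (M : Matrix (Fin q) (Fin q) ℝ) :
    Matrix.trace (M * Hmat t x p)
      = (∑ k, p k * (x k ⬝ᵥ (M *ᵥ x k))) - t * (gvec x p ⬝ᵥ (M *ᵥ gvec x p)) := by
  simp only [Hmat, Gmat, Matrix.mul_sub, Matrix.trace_sub, Finset.mul_sum,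
    Matrix.mul_smul, Matrix.trace_sum, Matrix.trace_smul, smul_eq_mul,
    trace_mul_vecMulVec']

lemma Hmat_isHermitian : (Hmat t x p).IsHermitian := by
  unfold Matrix.IsHermitian
  ext i j
  simp [Hmat, Gmat, Matrix.vecMulVec_apply, Matrix.sum_apply, mul_comm]

lemma Hmat_posSemidef (hp : designMeasure p) (ht0 : 0 ≤ t) (ht1 : t < 1) :
    (Hmat t x p).PosSemidef := by
  refine .of_dotProduct_mulVec_nonneg (Hmat_isHermitian t x p) fun v => ?_
  have hquad : v ⬝ᵥ (Hmat t x p *ᵥ v)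
      = (∑ k, p k * (v ⬝ᵥ x k)^2) - t * (v ⬝ᵥ gvec x p)^2 := by
    simp only [Hmat, Matrix.sub_mulVec, dotProduct_sub, Gmat]
    rw [show ((∑ i, p i • Matrix.vecMulVec (x i) (x i)) *ᵥ v)
        = ∑ i, p i • (Matrix.vecMulVec (x i) (x i) *ᵥ v) from ?_]
    · rw [dot_sum_smul]
      rw [show ((t • Matrix.vecMulVec (gvec x p) (gvec x p)) *ᵥ v)
          = t • (Matrix.vecMulVec (gvec x p) (gvec x p) *ᵥ v) from ?_]
      · rw [dotProduct_smul, smul_eq_mul, dot_vecMulVec_mulVec]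
        congr 1
        · congr 1; ext k; rw [dot_vecMulVec_mulVec]; rw [dotProduct_comm (x k) v]; ring
        · rw [dotProduct_comm (gvec x p) v]; ring
      · rw [Matrix.smul_mulVec]
    · exact sum_smul_mulVec p _ v
  rw [show star v = v from rfl]
  rw [hquad]
  have hg : v ⬝ᵥ gvec x p = ∑ k, p k * (v ⬝ᵥ x k) := dot_sum_smul v p x
  have hcs : (∑ k, p k * (v ⬝ᵥ x k))^2 ≤ ∑ k, p k * (v ⬝ᵥ x k)^2 := by
    have := Finset.sum_mul_sq_le_sq_mul_sq Finset.univ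
      (fun k => Real.sqrt (p k)) (fun k => Real.sqrt (p k) * (v ⬝ᵥ x k))
    have e1 : ∀ k, Real.sqrt (p k) * (Real.sqrt (p k) * (v ⬝ᵥ x k)) = p k * (v ⬝ᵥ x k) := by
      intro k; rw [← mul_assoc, Real.mul_self_sqrt (hp.1 k)]
    have e2 : ∀ k, Real.sqrt (p k) ^ 2 = p k := fun k => Real.sq_sqrt (hp.1 k)
    have e3 : ∀ k, (Real.sqrt (p k) * (v ⬝ᵥ x k)) ^ 2 = p k * (v ⬝ᵥ x k)^2 := by
      intro k; rw [mul_pow, e2]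
    simp only [e1, e2, e3] at this
    simpa [hp.2] using this
  have hge : t * (v ⬝ᵥ gvec x p)^2 ≤ (∑ k, p k * (v ⬝ᵥ x k)^2) := by
    calc t * (v ⬝ᵥ gvec x p)^2 ≤ 1 * (v ⬝ᵥ gvec x p)^2 := by
            apply mul_le_mul_of_nonneg_right (le_of_lt ht1) (sq_nonneg _)
      _ = (∑ k, p k * (v ⬝ᵥ x k))^2 := by rw [one_mul, hg]
      _ ≤ _ := hcs
  linarith

lemma gvec_dot (w : Fin q → ℝ) : gvec x p ⬝ᵥ w = ∑ k, p k * (x k ⬝ᵥ w) := by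
  rw [dotProduct_comm, show gvec x p = ∑ k, p k • x k from rfl, dot_sum_smul]
  congr 1; ext k; rw [dotProduct_comm]

lemma dot_mulVec_gvec (M : Matrix (Fin q) (Fin q) ℝ) (u : Fin q → ℝ) :
    u ⬝ᵥ (M *ᵥ gvec x p) = ∑ k, p k * (u ⬝ᵥ (M *ᵥ x k)) := by
  rw [show gvec x p = ∑ k, p k • x k from rfl, mulVec_sum_smul, dot_sum_smul]

end Statement8Aux

open Statement8Aux
theorem statement_8 {q n : ℕ} (hq : 1 ≤ q) (hn : 1 ≤ n)
    (x : Fin n → Fin q → ℝ) (t : ℝ) (ht0 : 0 ≤ t) (ht1 : t < 1)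
    (δ : ℝ) (hδ : 0 < δ)
    (phat : Fin n → ℝ) (hphat : designMeasure phat)
    (hHphat : IsUnit (Hmat t x phat).det)
    (hψ : ∀ i, psiA t x phat i - Matrix.trace ((Hmat t x phat)⁻¹) ≤ δ) :
    ∀ p : Fin n → ℝ, designMeasure p → IsUnit (Hmat t x p).det →
      -Matrix.trace ((Hmat t x phat)⁻¹) ≥ -Matrix.trace ((Hmat t x p)⁻¹) - δ := by
  intro p hp hHp
  classical
  set A := Hmat t x phat with hA
  set B := Hmat t x p with hB
  set M := A⁻¹ * A⁻¹ with hM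
  set g := gvec x p with hg
  set gh := gvec x phat with hgh
  have hAh : A.IsHermitian := Hmat_isHermitian t x phat
  have hBh : B.IsHermitian := Hmat_isHermitian t x p
  have hAinv : A⁻¹.IsHermitian := hAh.inv
  have hBinv : B⁻¹.IsHermitian := hBh.inv
  have hBpsd : B.PosSemidef := Hmat_posSemidef t x p hp ht0 ht1
  have hMpsd : M.PosSemidef := by
    show (A⁻¹ * A⁻¹).PosSemidef
    nth_rewrite 1 [← hAinv]
    exact Matrix.posSemidef_conjTranspose_mul_self _
  -- Step 1: tr B⁻¹ + tr (A⁻¹ B A⁻¹) - 2 tr A⁻¹ ≥ 0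
  have hBi : B⁻¹ * B = 1 := Matrix.nonsing_inv_mul B hHp
  have hBi' : B * B⁻¹ = 1 := Matrix.mul_nonsing_inv B hHp
  have h1 : ((B⁻¹ - A⁻¹) * B * (B⁻¹ - A⁻¹)ᴴ).PosSemidef :=
    hBpsd.mul_mul_conjTranspose_same _
  have h2 : (B⁻¹ - A⁻¹)ᴴ = B⁻¹ - A⁻¹ := by
    rw [Matrix.conjTranspose_sub, hBinv, hAinv]
  rw [h2] at h1
  have h3 : (B⁻¹ - A⁻¹) * B * (B⁻¹ - A⁻¹) = B⁻¹ - A⁻¹ - A⁻¹ + A⁻¹ * B * A⁻¹ := by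
    simp only [Matrix.sub_mul, Matrix.mul_sub, Matrix.mul_assoc, hBi, hBi',
      Matrix.mul_one, Matrix.one_mul]
    abel
  have key1 : 0 ≤ Matrix.trace B⁻¹ + Matrix.trace (A⁻¹ * B * A⁻¹)
      - 2 * Matrix.trace A⁻¹ := by
    have := psd_trace_nonneg h1
    rw [h3, Matrix.trace_add, Matrix.trace_sub, Matrix.trace_sub] at this
    linarith
  -- Step 2: tr (A⁻¹ B A⁻¹) = tr (M B)
  have htr : Matrix.trace (A⁻¹ * B * A⁻¹) = Matrix.trace (M * B) := by
    rw [Matrix.trace_mul_cycle]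
  -- Step 3: tr (M B) ≤ ∑ p_k ψ_k ≤ tr A⁻¹ + δ
  have hψk : ∀ k, psiA t x phat k
      = (x k ⬝ᵥ (M *ᵥ x k)) - t * (x k ⬝ᵥ (M *ᵥ gh)) - t * (gh ⬝ᵥ (M *ᵥ x k))
        + t * (gh ⬝ᵥ (M *ᵥ gh)) := by
    intro k
    show (1 - t) * (x k ⬝ᵥ (M *ᵥ x k))
        + t * ((x k - gh) ⬝ᵥ (M *ᵥ (x k - gh))) = _
    rw [Matrix.mulVec_sub, dotProduct_sub, sub_dotProduct, sub_dotProduct]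
    ring
  have hS : ∑ k, p k * psiA t x phat k
      = (∑ k, p k * (x k ⬝ᵥ (M *ᵥ x k))) - t * (g ⬝ᵥ (M *ᵥ gh)) - t * (gh ⬝ᵥ (M *ᵥ g))
        + t * (gh ⬝ᵥ (M *ᵥ gh)) := by
    have e1 : ∑ k, p k * psiA t x phat k
        = (∑ k, p k * (x k ⬝ᵥ (M *ᵥ x k)))
          - (∑ k, t * (p k * (x k ⬝ᵥ (M *ᵥ gh))))
          - (∑ k, t * (p k * (gh ⬝ᵥ (M *ᵥ x k))))
          + (∑ k, t * (p k * (gh ⬝ᵥ (M *ᵥ gh)))) := by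
      rw [← Finset.sum_sub_distrib, ← Finset.sum_sub_distrib, ← Finset.sum_add_distrib]
      apply Finset.sum_congr rfl
      intro k _
      rw [hψk k]; ring
    rw [e1, ← Finset.mul_sum, ← Finset.mul_sum, ← Finset.mul_sum,
      ← gvec_dot x p (M *ᵥ gh), ← dot_mulVec_gvec x p M gh,
      ← Finset.sum_mul, hp.2, one_mul]
  have hSle : ∑ k, p k * psiA t x phat k ≤ Matrix.trace A⁻¹ + δ := by
    calc ∑ k, p k * psiA t x phat k
        ≤ ∑ k, p k * (Matrix.trace A⁻¹ + δ) := by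
          apply Finset.sum_le_sum
          intro k _
          exact mul_le_mul_of_nonneg_left (by linarith [hψ k]) (hp.1 k)
      _ = Matrix.trace A⁻¹ + δ := by rw [← Finset.sum_mul, hp.2, one_mul]
  have hdiff : ∑ k, p k * psiA t x phat k - Matrix.trace (M * B)
      = t * ((g - gh) ⬝ᵥ (M *ᵥ (g - gh))) := by
    rw [hS, hB, trace_mul_Hmat t x p M, Matrix.mulVec_sub, dotProduct_sub,
      sub_dotProduct, sub_dotProduct]
    ring
  have hquadnn : 0 ≤ (g - gh) ⬝ᵥ (M *ᵥ (g - gh)) := hMpsd.dotProduct_mulVec_nonneg (g - gh)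
  have htMB : Matrix.trace (M * B) ≤ Matrix.trace A⁻¹ + δ := by
    nlinarith [mul_nonneg ht0 hquadnn]
  have key2 : Matrix.trace (A⁻¹ * B * A⁻¹) ≤ Matrix.trace A⁻¹ + δ := by
    rw [htr]; exact htMB
  have : Matrix.trace B⁻¹ ≥ Matrix.trace A⁻¹ - δ := by linarith
  linarith
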